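/- Let G be a finite simple graph on Fin n, let d ≥ 1, r ≥ 1, and let c : Fin n → ℝ be arbitrary real coefficients. Let ρ be any density matrix on ℂ^d. Then for every family Π : Fin n → Matrix (Fin d) (Fin d) ℂ of rank-r orthogonal projections realizing G, there exists a family Π' of rank-r orthogonal projections realizing G such that ∑_k c_k · Re(tr(Π'_k * ρ)) ≥ (r/d) · ∑_k c_k. (The value of any noncontextuality inequality functional at the maximally mixed state, which equals (r/d)·∑_k c_k for every realization, is a lower bound for its optimized value at every state: the maximally mixed state is the least contextual state.) -/

import Mathlib

open Matrix
open scoped ComplexOrder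

/-- A finset of vertices is independent: no two of its vertices are adjacent. -/
def IsIndep {n : ℕ} (G : SimpleGraph (Fin n)) (s : Finset (Fin n)) : Prop :=
  ∀ v ∈ s, ∀ u ∈ s, ¬ G.Adj v u

/-- Incidence vector of a finset of vertices. -/
def incVec {n : ℕ} (s : Finset (Fin n)) : Fin n → ℝ := fun v => if v ∈ s then 1 else 0

/-- STAB(G): the convex hull of the incidence vectors of the independent sets of `G`. -/
def STAB {n : ℕ} (G : SimpleGraph (Fin n)) : Set (Fin n → ℝ) :=
  convexHull ℝ {x | ∃ s : Finset (Fin n), IsIndep G s ∧ x = incVec s}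

/-- A fractional coloring of `G`: nonnegative weights supported on independent sets,
covering every vertex with total weight at least 1. -/
def IsFracColoring {n : ℕ} (G : SimpleGraph (Fin n)) (w : Finset (Fin n) → ℝ) : Prop :=
  (∀ s, 0 ≤ w s) ∧ (∀ s, w s ≠ 0 → IsIndep G s) ∧
    (∀ v : Fin n, 1 ≤ ∑ s : Finset (Fin n), if v ∈ s then w s else 0)

/-- Total weight of a weight assignment on independent sets. -/
def totalWeight {n : ℕ} (w : Finset (Fin n) → ℝ) : ℝ := ∑ s : Finset (Fin n), w s

/-- `P` is an orthogonal projection of rank `r`: Hermitian, idempotent, of rank `r`. -/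
def IsProjOfRank {d : ℕ} (r : ℕ) (P : Matrix (Fin d) (Fin d) ℂ) : Prop :=
  P.IsHermitian ∧ P * P = P ∧ P.rank = r

/-- A family of projectors realizes the orthogonality graph `G`:
adjacent vertices carry orthogonal projectors. -/
def Realizes {n d : ℕ} (G : SimpleGraph (Fin n)) (P : Fin n → Matrix (Fin d) (Fin d) ℂ) : Prop :=
  ∀ j k, G.Adj j k → P j * P k = 0


noncomputable def Wom (d : ℕ) : ℂ := Complex.exp (2 * Real.pi * Complex.I / d)

noncomputable def Wmat (d : ℕ) (a b : Fin d) : Matrix (Fin d) (Fin d) ℂ :=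
  Matrix.of fun j k => if k = j - a then Wom d ^ ((b : ℕ) * (k : ℕ)) else 0

lemma Wom_prim {d : ℕ} (hd : d ≠ 0) : IsPrimitiveRoot (Wom d) d :=
  Complex.isPrimitiveRoot_exp d hd

lemma Wom_ne_zero (d : ℕ) : Wom d ≠ 0 := Complex.exp_ne_zero _

lemma Wom_conj (d : ℕ) : star (Wom d) = (Wom d)⁻¹ := by
  rw [Complex.star_def, Wom, ← Complex.exp_conj, ← Complex.exp_neg]
  congr 1
  simp only [map_div₀, _root_.map_mul, map_ofNat, Complex.conj_ofReal, Complex.conj_I, map_natCast]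
  ring

lemma Wom_star_pow (d m : ℕ) : star (Wom d ^ m) = ((Wom d)⁻¹) ^ m := by
  rw [star_pow, Wom_conj]

lemma Wmat_mul_conjTranspose {d : ℕ} [NeZero d] (a b : Fin d) :
    Wmat d a b * (Wmat d a b)ᴴ = 1 := by
  ext j l
  simp only [Matrix.mul_apply, conjTranspose_apply, Wmat, of_apply]
  rw [Finset.sum_eq_single (j - a)]
  · rw [if_pos rfl]
    by_cases h : j = l
    · subst h
      rw [if_pos rfl, Wom_star_pow, ← mul_pow, mul_inv_cancel₀ (Wom_ne_zero d), one_pow,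
        one_apply_eq]
    · have h2 : ¬ (j - a = l - a) := fun hc => h (sub_left_injective hc)
      rw [if_neg h2, star_zero, mul_zero, one_apply_ne h]
  · intro k _ hk
    rw [if_neg hk, zero_mul]
  · simp

lemma Wmat_conj_sum {d : ℕ} [NeZero d] (ρ : Matrix (Fin d) (Fin d) ℂ) :
    ∑ ab : Fin d × Fin d, Wmat d ab.1 ab.2 * ρ * (Wmat d ab.1 ab.2)ᴴ
      = ((d : ℂ) * ρ.trace) • 1 := by
  have hd : d ≠ 0 := NeZero.ne d
  have entry : ∀ (a b j l : Fin d), (Wmat d a b * ρ * (Wmat d a b)ᴴ) j l =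
      Wom d ^ ((b : ℕ) * ((j - a : Fin d) : ℕ)) * ρ (j - a) (l - a)
        * star (Wom d ^ ((b : ℕ) * ((l - a : Fin d) : ℕ))) := by
    intro a b j l
    have h1 : ∀ m, (Wmat d a b * ρ) j m =
        Wom d ^ ((b : ℕ) * ((j - a : Fin d) : ℕ)) * ρ (j - a) m := by
      intro m
      rw [Matrix.mul_apply, Finset.sum_eq_single (j - a)]
      · simp only [Wmat, of_apply]; simp
      · intro k _ hk; simp only [Wmat, of_apply]; rw [if_neg hk, zero_mul]
      · simp
    rw [Matrix.mul_apply, Finset.sum_eq_single (l - a)]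
    · rw [h1, conjTranspose_apply]; simp only [Wmat, of_apply]; simp
    · intro m _ hm
      rw [conjTranspose_apply]; simp only [Wmat, of_apply]
      rw [if_neg hm, star_zero, mul_zero]
    · simp
  have hgeom : ∀ s t : ℕ, s < d → t < d →
      (∑ i ∈ Finset.range d, (Wom d ^ s * ((Wom d)⁻¹) ^ t) ^ i) =
        if s = t then (d : ℂ) else 0 := by
    intro s t hs ht
    by_cases hst : s = t
    · subst hst
      rw [if_pos rfl, inv_pow, mul_inv_cancel₀ (pow_ne_zero _ (Wom_ne_zero d))]
      simp
    · rw [if_neg hst]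
      have h1 : Wom d ^ d = 1 := (Wom_prim hd).pow_eq_one
      have hζd : (Wom d ^ s * ((Wom d)⁻¹) ^ t) ^ d = 1 := by
        rw [mul_pow, ← pow_mul, Nat.mul_comm s d, pow_mul, h1, one_pow, one_mul,
          ← pow_mul, Nat.mul_comm t d, pow_mul, inv_pow, h1, inv_one, one_pow]
      have hζ1 : Wom d ^ s * ((Wom d)⁻¹) ^ t ≠ 1 := by
        intro hcon
        rw [inv_pow] at hcon
        exact hst ((Wom_prim hd).pow_inj hs ht
          ((mul_inv_eq_one₀ (pow_ne_zero _ (Wom_ne_zero d))).mp hcon))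
      rw [geom_sum_eq hζ1, hζd, sub_self, zero_div]
  have hswap : ∀ (s t : ℕ) (C : ℂ),
      (∑ b : Fin d, Wom d ^ ((b : ℕ) * s) * C * star (Wom d ^ ((b : ℕ) * t)))
        = C * ∑ i ∈ Finset.range d, (Wom d ^ s * ((Wom d)⁻¹) ^ t) ^ i := by
    intro s t C
    rw [Finset.mul_sum, ← Fin.sum_univ_eq_sum_range]
    refine Finset.sum_congr rfl fun b _ => ?_
    rw [Wom_star_pow, mul_pow, ← pow_mul, ← pow_mul, Nat.mul_comm s (b : ℕ),
      Nat.mul_comm t (b : ℕ)]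
    ring
  ext j l
  rw [Matrix.sum_apply]
  rw [show (Finset.univ : Finset (Fin d × Fin d)) = Finset.univ ×ˢ Finset.univ by simp,
    Finset.sum_product]
  simp only [entry]
  have inner : ∀ a : Fin d,
      (∑ b : Fin d, Wom d ^ ((b : ℕ) * ((j - a : Fin d) : ℕ)) * ρ (j - a) (l - a)
        * star (Wom d ^ ((b : ℕ) * ((l - a : Fin d) : ℕ))))
      = ρ (j - a) (l - a) * (if ((j - a : Fin d) : ℕ) = ((l - a : Fin d) : ℕ)
          then (d : ℂ) else 0) := by
    intro a
    rw [hswap, hgeom _ _ (Fin.is_lt _) (Fin.is_lt _)]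
  simp only [inner]
  by_cases h : j = l
  · subst h
    simp only [eq_self_iff_true, if_true, Matrix.smul_apply, Matrix.one_apply_eq,
      smul_eq_mul, mul_one]
    rw [show ∀ x : Fin d → ℂ, (∑ a, x a * (d : ℂ)) = (∑ a, x a) * d from
      fun x => by rw [Finset.sum_mul]]
    rw [show (∑ a : Fin d, ρ (j - a) (j - a)) = ρ.trace from ?_]
    · ring
    · rw [Matrix.trace]
      exact Fintype.sum_equiv (Equiv.subLeft j) _ _ (fun a => rfl)
  · have : ∀ a : Fin d, ¬ (((j - a : Fin d) : ℕ) = ((l - a : Fin d) : ℕ)) := by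
      intro a hc
      exact h (sub_left_injective (Fin.val_injective hc))
    simp only [this, if_false, mul_zero, Finset.sum_const_zero, Matrix.smul_apply,
      Matrix.one_apply_ne h, smul_eq_mul, mul_zero]

lemma trace_eq_rank_of_idem {d : ℕ} (P : Matrix (Fin d) (Fin d) ℂ) (h : P * P = P) :
    P.trace = (P.rank : ℂ) := by
  have hcomp : P.mulVecLin ∘ₗ P.mulVecLin = P.mulVecLin := by
    rw [← Matrix.mulVecLin_mul, h]
  have hproj : LinearMap.IsProj (LinearMap.range P.mulVecLin) P.mulVecLin := by
    refine ⟨fun x => LinearMap.mem_range_self _ x, ?_⟩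
    rintro x ⟨y, rfl⟩
    exact LinearMap.congr_fun hcomp y
  have ht := hproj.trace
  have h2 : LinearMap.trace ℂ (Fin d → ℂ) P.mulVecLin = Matrix.trace P := by
    rw [LinearMap.trace_eq_matrix_trace ℂ (Pi.basisFun ℂ (Fin d)),
      LinearMap.toMatrix_eq_toMatrix']
    congr 1
    exact LinearMap.toMatrix'_toLin' P
  rw [← h2, ht, Matrix.rank]

theorem stmt9 {n d : ℕ} (G : SimpleGraph (Fin n)) (r : ℕ) (hd : 1 ≤ d) (hr : 1 ≤ r)
    (c : Fin n → ℝ) (ρ : Matrix (Fin d) (Fin d) ℂ) (hρ : ρ.PosSemidef) (htr : ρ.trace = 1) :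
    ∀ P : Fin n → Matrix (Fin d) (Fin d) ℂ,
      (∀ k, IsProjOfRank r (P k)) → Realizes G P →
        ∃ P' : Fin n → Matrix (Fin d) (Fin d) ℂ,
          (∀ k, IsProjOfRank r (P' k)) ∧ Realizes G P' ∧
          (r : ℝ) / d * ∑ k : Fin n, c k ≤ ∑ k : Fin n, c k * ((P' k * ρ).trace).re := by
  intro P hP hreal
  haveI : NeZero d := ⟨Nat.one_le_iff_ne_zero.mp hd⟩
  have hdR : (d : ℝ) ≠ 0 := Nat.cast_ne_zero.mpr (NeZero.ne d)
  have htrP : ∀ k, (P k).trace = (r : ℂ) := fun k => by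
    rw [trace_eq_rank_of_idem _ (hP k).2.1, (hP k).2.2]
  have key : ∀ (k : Fin n) (a b : Fin d),
      (((Wmat d a b)ᴴ * P k * Wmat d a b) * ρ).trace
        = (P k * (Wmat d a b * ρ * (Wmat d a b)ᴴ)).trace := by
    intro k a b
    simp only [Matrix.mul_assoc]
    rw [Matrix.trace_mul_comm]
    simp only [Matrix.mul_assoc]
  have key2 : ∀ k : Fin n,
      (∑ ab : Fin d × Fin d, (((Wmat d ab.1 ab.2)ᴴ * P k * Wmat d ab.1 ab.2) * ρ).trace)
        = (d : ℂ) * r := by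
    intro k
    calc (∑ ab : Fin d × Fin d, (((Wmat d ab.1 ab.2)ᴴ * P k * Wmat d ab.1 ab.2) * ρ).trace)
        = ∑ ab : Fin d × Fin d,
            (P k * (Wmat d ab.1 ab.2 * ρ * (Wmat d ab.1 ab.2)ᴴ)).trace :=
          Finset.sum_congr rfl fun ab _ => key k ab.1 ab.2
      _ = (P k * ∑ ab : Fin d × Fin d, Wmat d ab.1 ab.2 * ρ * (Wmat d ab.1 ab.2)ᴴ).trace := by
          rw [Finset.mul_sum, Matrix.trace_sum]
      _ = (P k * (((d : ℂ) * ρ.trace) • 1)).trace := by rw [Wmat_conj_sum]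
      _ = (d : ℂ) * r := by
          rw [Matrix.mul_smul, Matrix.trace_smul, Matrix.mul_one, htr, mul_one, smul_eq_mul,
            htrP k]
  set g : Fin d × Fin d → ℝ := fun ab =>
    ∑ k : Fin n, c k * ((((Wmat d ab.1 ab.2)ᴴ * P k * Wmat d ab.1 ab.2) * ρ).trace).re with hg
  have hsum : ∑ ab : Fin d × Fin d, g ab = (d : ℝ) * r * ∑ k : Fin n, c k := by
    rw [hg]
    rw [Finset.sum_comm]
    have : ∀ k : Fin n,
        (∑ ab : Fin d × Fin d,
          c k * ((((Wmat d ab.1 ab.2)ᴴ * P k * Wmat d ab.1 ab.2) * ρ).trace).re)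
          = c k * ((d : ℝ) * r) := by
      intro k
      rw [← Finset.mul_sum, ← Complex.re_sum, key2 k]
      norm_num
    simp only [this]
    rw [← Finset.sum_mul]
    ring
  have havg : ∃ ab : Fin d × Fin d, (r : ℝ) / d * ∑ k : Fin n, c k ≤ g ab := by
    obtain ⟨ab, -, hab⟩ := Finset.exists_le_of_sum_le (s := (Finset.univ : Finset (Fin d × Fin d)))
      (f := fun _ => (r : ℝ) / d * ∑ k : Fin n, c k) (g := g) Finset.univ_nonempty (by
        rw [Finset.sum_const, hsum, Finset.card_univ, Fintype.card_prod, Fintype.card_fin,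
          nsmul_eq_mul]
        apply le_of_eq
        push_cast
        field_simp)
    exact ⟨ab, hab⟩
  obtain ⟨⟨a, b⟩, hab⟩ := havg
  set W := Wmat d a b with hWdef
  have hW1 : W * Wᴴ = 1 := Wmat_mul_conjTranspose a b
  have hW2 : Wᴴ * W = 1 := mul_eq_one_comm.mp hW1
  have hdet : IsUnit W.det := by
    apply IsUnit.of_mul_eq_one (Wᴴ).det
    rw [← Matrix.det_mul, hW1, Matrix.det_one]
  have hdetH : IsUnit (Wᴴ).det := by
    apply IsUnit.of_mul_eq_one W.det
    rw [← Matrix.det_mul, hW2, Matrix.det_one]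
  refine ⟨fun k => Wᴴ * P k * W, fun k => ⟨?_, ?_, ?_⟩, ?_, ?_⟩
  · show (Wᴴ * P k * W)ᴴ = Wᴴ * P k * W
    rw [Matrix.conjTranspose_mul, Matrix.conjTranspose_mul, Matrix.conjTranspose_conjTranspose,
      (hP k).1.eq, Matrix.mul_assoc]
  · show (Wᴴ * P k * W) * (Wᴴ * P k * W) = Wᴴ * P k * W
    simp only [Matrix.mul_assoc]
    rw [← Matrix.mul_assoc W Wᴴ, hW1, Matrix.one_mul, ← Matrix.mul_assoc (P k) (P k),
      (hP k).2.1]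
  · show (Wᴴ * P k * W).rank = r
    rw [Matrix.rank_mul_eq_left_of_isUnit_det W (Wᴴ * P k) hdet,
      Matrix.rank_mul_eq_right_of_isUnit_det Wᴴ (P k) hdetH, (hP k).2.2]
  · intro j k hadj
    show (Wᴴ * P j * W) * (Wᴴ * P k * W) = 0
    simp only [Matrix.mul_assoc]
    rw [← Matrix.mul_assoc W Wᴴ, hW1, Matrix.one_mul, ← Matrix.mul_assoc (P j) (P k),
      hreal j k hadj, Matrix.zero_mul, Matrix.mul_zero]
  · exact hab
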